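/- arXiv:1405.4806 — 2 statements merged into one kernel-verified Lean document; each statement's English description precedes it below -/
import Mathlib

section
/- With ρ and ρ̄ as above (ρ(x₁…xₗ) = ∑ᵢ ϑ(xᵢ)2^{−i} + 2^{−(l+1)}, ρ̄ analogously with ϑ̄, where ϑ(x)+ϑ̄(x)=1 on {A,B}), if u and v are nonempty words over {A,B} with ρ(u) + ρ̄(v) = 1, then u = v. -/
/-- The end-marked binary encoding of a word over a two-element alphabet. -/
noncomputable def rho (θ : Bool → ℝ) (w : List Bool) : ℝ :=
  (∑ i : Fin w.length, θ (w.get i) * (1 / 2 : ℝ) ^ (i.val + 1)) + (1 / 2 : ℝ) ^ (w.length + 1)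

lemma rho_nil (θ : Bool → ℝ) : rho θ [] = 1 / 2 := by
  simp [rho]

lemma rho_cons (θ : Bool → ℝ) (x : Bool) (w : List Bool) :
    rho θ (x :: w) = (θ x + rho θ w) / 2 := by
  simp only [rho, List.length_cons, Fin.sum_univ_succ, List.get, Fin.val_succ, Fin.val_zero,
    pow_succ]
  have hs : (∑ i : Fin w.length, θ (w.get ⟨i.val, i.isLt⟩) * ((1 / 2 : ℝ) ^ i.val * (1/2) * (1/2)))
      = (∑ i : Fin w.length, θ (w.get i) * ((1 / 2 : ℝ) ^ i.val * (1/2))) / 2 := by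
    rw [Finset.sum_div]
    exact Finset.sum_congr rfl fun i _ => by ring
  have hg : ∀ i : Fin w.length, (x :: w).get i.succ = w.get ⟨i.val, i.isLt⟩ := fun i => rfl
  have hg0 : (x :: w).get 0 = x := rfl
  simp only [hg, hg0]
  rw [hs]
  ring

lemma rho_pos (θ : Bool → ℝ) (hθ : ∀ x, θ x = 0 ∨ θ x = 1) (w : List Bool) :
    0 < rho θ w := by
  induction w with
  | nil => rw [rho_nil]; norm_num
  | cons x w ih =>
      rw [rho_cons]
      rcases hθ x with h | h <;> rw [h] <;> linarith

lemma rho_lt_one (θ : Bool → ℝ) (hθ : ∀ x, θ x = 0 ∨ θ x = 1) (w : List Bool) :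
    rho θ w < 1 := by
  induction w with
  | nil => rw [rho_nil]; norm_num
  | cons x w ih =>
      rw [rho_cons]
      rcases hθ x with h | h <;> rw [h] <;> linarith

lemma rho_inj (θ : Bool → ℝ) (hθ : ∀ x, θ x = 0 ∨ θ x = 1) (hinj : θ true ≠ θ false)
    (u v : List Bool) (h : rho θ u = rho θ v) : u = v := by
  induction u generalizing v with
  | nil =>
      cases v with
      | nil => rfl
      | cons y v =>
          exfalso
          rw [rho_nil, rho_cons] at h
          have h1 := rho_pos θ hθ v
          have h2 := rho_lt_one θ hθ v
          rcases hθ y with hy | hy <;> rw [hy] at h <;> linarith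
  | cons x u ih =>
      cases v with
      | nil =>
          exfalso
          rw [rho_nil, rho_cons] at h
          have h1 := rho_pos θ hθ u
          have h2 := rho_lt_one θ hθ u
          rcases hθ x with hx | hx <;> rw [hx] at h <;> linarith
      | cons y v =>
          rw [rho_cons, rho_cons] at h
          have h1 := rho_pos θ hθ u
          have h2 := rho_lt_one θ hθ u
          have h3 := rho_pos θ hθ v
          have h4 := rho_lt_one θ hθ v
          have hxy : θ x = θ y := by
            rcases hθ x with hx | hx <;> rcases hθ y with hy | hy <;>
              rw [hx, hy] at h ⊢ <;> linarith
          have hx : x = y := by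
            cases x <;> cases y <;> simp_all
          have : rho θ u = rho θ v := by rw [hxy] at h; linarith
          rw [hx, ih v this]

lemma rho_add_compl (θ θbar : Bool → ℝ) (hsum : ∀ x, θ x + θbar x = 1) (w : List Bool) :
    rho θ w + rho θbar w = 1 := by
  induction w with
  | nil => rw [rho_nil, rho_nil]; norm_num
  | cons x w ih =>
      rw [rho_cons, rho_cons]
      have := hsum x
      linarith

theorem stmt_3 (θ θbar : Bool → ℝ)
    (hθ : ∀ x, θ x = 0 ∨ θ x = 1) (hθbar : ∀ x, θbar x = 0 ∨ θbar x = 1)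
    (hsum : ∀ x, θ x + θbar x = 1) (hinj : θ true ≠ θ false)
    (u v : List Bool) (hu : u ≠ []) (hv : v ≠ [])
    (h : rho θ u + rho θbar v = 1) :
    u = v := by
  have key := rho_add_compl θ θbar hsum v
  exact rho_inj θ hθ hinj u v (by linarith)
end

section
/- If u and v are nonempty words over {A,B} of different lengths, then ρ(u) + ρ̄(v) ≠ 1, where ρ and ρ̄ are the end-marked binary encodings. -/
lemma rho_odd (θ : Bool → ℝ) (hθ : ∀ x, θ x = 0 ∨ θ x = 1) (w : List Bool) :
    ∃ k : ℕ, rho θ w * 2 ^ (w.length + 1) = 2 * k + 1 := by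
  refine ⟨∑ i : Fin w.length,
      (if θ (w.get i) = 1 then 1 else 0) * 2 ^ (w.length - 1 - i.val), ?_⟩
  unfold rho
  rw [add_mul, Finset.sum_mul]
  push_cast [Finset.mul_sum]
  have hend : (1 / 2 : ℝ) ^ (w.length + 1) * 2 ^ (w.length + 1) = 1 := by
    rw [div_pow, one_pow, div_mul_cancel₀]
    positivity
  rw [hend]
  congr 1
  apply Finset.sum_congr rfl
  intro i _
  have hi : i.val < w.length := i.isLt
  have hpow : (2 : ℝ) ^ (w.length + 1) = 2 ^ (i.val + 1) * (2 * 2 ^ (w.length - 1 - i.val)) := by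
    rw [← pow_succ']
    rw [← pow_add]
    congr 1
    omega
  simp only [List.get_eq_getElem] at *
  rcases hθ w[i.val] with h | h
  · simp [h]
  · simp only [h, one_mul]
    rw [if_true, one_mul, hpow, ← mul_assoc, div_pow, one_pow,
      div_mul_cancel₀, one_mul]
    positivity

lemma key (θ θbar : Bool → ℝ)
    (hθ : ∀ x, θ x = 0 ∨ θ x = 1) (hθbar : ∀ x, θbar x = 0 ∨ θbar x = 1)
    (u v : List Bool) (hlen : u.length < v.length) :
    rho θ u + rho θbar v ≠ 1 := by
  intro h
  obtain ⟨a, ha⟩ := rho_odd θ hθ u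
  obtain ⟨b, hb⟩ := rho_odd θbar hθbar v
  have hmul : (rho θ u + rho θbar v) * 2 ^ (v.length + 1) = 2 ^ (v.length + 1) := by
    rw [h, one_mul]
  have hsplit : (2 : ℝ) ^ (v.length + 1)
      = 2 ^ (u.length + 1) * (2 * 2 ^ (v.length - u.length - 1)) := by
    rw [← pow_succ', ← pow_add]
    congr 1
    omega
  have hu2 : rho θ u * 2 ^ (v.length + 1)
      = (2 * (a:ℝ) + 1) * (2 * 2 ^ (v.length - u.length - 1)) := by
    rw [hsplit, ← mul_assoc, ha]
  rw [add_mul, hu2, hb, hsplit] at hmul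
  have h2 : ((2 * a + 1) * (2 * 2 ^ (v.length - u.length - 1)) + (2 * b + 1) : ℕ)
      = 2 ^ (u.length + 1) * (2 * 2 ^ (v.length - u.length - 1)) := by
    exact_mod_cast hmul
  set c := 2 ^ (v.length - u.length - 1)
  set e := (2 * a + 1) * c
  have he : (2 * a + 1) * (2 * c) = 2 * e := by ring
  have hd : 2 ^ (u.length + 1) * (2 * c) = 2 * (2 ^ (u.length + 1) * c) := by ring
  omega

theorem stmt_16 (θ θbar : Bool → ℝ)
    (hθ : ∀ x, θ x = 0 ∨ θ x = 1) (hθbar : ∀ x, θbar x = 0 ∨ θbar x = 1)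
    (hsum : ∀ x, θ x + θbar x = 1)
    (u v : List Bool) (hu : u ≠ []) (hv : v ≠ []) (hlen : u.length ≠ v.length) :
    rho θ u + rho θbar v ≠ 1 := by
  rcases lt_or_gt_of_ne hlen with h | h
  · exact key θ θbar hθ hθbar u v h
  · rw [add_comm]
    exact key θbar θ hθbar hθ v u h
end
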